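/- Fixed-point counterexample on the two-sided infinite path: Let the social graph have vertex set ℤ with edges (i, i+1) for all i ∈ ℤ, let the confidence threshold be ε = 1, let x_i(0) = i for all i ∈ ℤ, and let the stubbornness levels α_i(t) ∈ [0,1] be arbitrary. Under group interaction, x_i(t) = i for all i ∈ ℤ and all t ∈ ℕ; in particular no consensus is reached. -/

import Mathlib

/-- The update neighborhood of vertex `i ∈ ℤ` at time `t` in the one-dimensional
mixed HK model under group interaction on the two-sided infinite path on `ℤ` with
edges `(i, i+1)`:
`N_i(t) = {j ∈ ℤ : j = i, or |i − j| = 1 and |x_i(t) − x_j(t)| ≤ ε}`. -/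
noncomputable def pathNbhdZ (ε : ℝ) (x : ℕ → ℤ → ℝ) (t : ℕ) (i : ℤ) : Finset ℤ :=
  ({i - 1, i, i + 1} : Finset ℤ).filter fun j =>
    j = i ∨ ((j = i + 1 ∨ j = i - 1) ∧ |x t i - x t j| ≤ ε)

/-- **Fixed-point counterexample on the two-sided infinite path.** With threshold
`ε = 1`, initial opinions `x_i(0) = i` for all `i ∈ ℤ`, and arbitrary stubbornness
levels, the group-interaction dynamics satisfy `x_i(t) = i` for all `i ∈ ℤ` and all
`t ∈ ℕ`; in particular no consensus is reached. -/
theorem fixed_point_counterexample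
    (x : ℕ → ℤ → ℝ) (α : ℕ → ℤ → ℝ)
    (hα : ∀ t i, α t i ∈ Set.Icc (0 : ℝ) 1)
    (hx0 : ∀ i : ℤ, x 0 i = (i : ℝ))
    (hdyn : ∀ t i, x (t + 1) i =
      α t i * x t i +
        ((1 - α t i) / ((pathNbhdZ 1 x t i).card : ℝ)) *
          ∑ k ∈ pathNbhdZ 1 x t i, x t k) :
    ∀ t : ℕ, ∀ i : ℤ, x t i = (i : ℝ) := by
  intro t
  induction t with
  | zero => exact hx0
  | succ t ih =>
    intro i
    have hN : pathNbhdZ 1 x t i = ({i - 1, i, i + 1} : Finset ℤ) := by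
      apply Finset.filter_true_of_mem
      intro j hj
      simp only [Finset.mem_insert, Finset.mem_singleton] at hj
      rcases hj with h | h | h
      · right
        refine ⟨Or.inr h, ?_⟩
        rw [ih i, h, ih (i - 1)]
        push_cast
        rw [show (i : ℝ) - ((i : ℝ) - 1) = 1 by ring, abs_one]
      · exact Or.inl h
      · right
        refine ⟨Or.inl h, ?_⟩
        rw [ih i, h, ih (i + 1)]
        push_cast
        rw [show (i : ℝ) - ((i : ℝ) + 1) = -1 by ring, abs_neg, abs_one]
    have hcard : (({i - 1, i, i + 1} : Finset ℤ)).card = 3 := by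
      rw [Finset.card_insert_of_notMem, Finset.card_insert_of_notMem] <;> simp <;> omega
    have hsum : ∑ k ∈ ({i - 1, i, i + 1} : Finset ℤ), x t k = 3 * (i : ℝ) := by
      have h1 : (i - 1 : ℤ) ∉ ({i, i + 1} : Finset ℤ) := by simp; omega
      have h2 : (i : ℤ) ∉ ({i + 1} : Finset ℤ) := by simp
      rw [Finset.sum_insert h1, Finset.sum_insert h2, Finset.sum_singleton, ih, ih, ih]
      push_cast; ring
    rw [hdyn, hN, hcard, hsum, ih]
    push_cast
    field_simp
    ring
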